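/- If 0 ≤ v_r < 2√(g h_r), then the discharge-form inverse Lax curve φ̃_r has exactly one zero in (0,∞), namely h = (2√(g h_r) − v_r)²/(4g); i.e., for h > 0 one has φ̃_r(h) = 0 if and only if h = (2√(g h_r) − v_r)²/(4g). -/
import Mathlib


/-- Inverse Lax curve through the right state `(hr, vr)`. -/
noncomputable def phir (g hr vr h : ℝ) : ℝ :=
  if h ≤ hr then vr - 2 * Real.sqrt (g * hr) + 2 * Real.sqrt (g * h)
  else vr + (h - hr) * Real.sqrt (g * (h + hr) / (2 * h * hr))

/-- Discharge-form inverse Lax curve through the right state. -/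
noncomputable def phirTilde (g hr vr h : ℝ) : ℝ := h * phir g hr vr h

/-- If `0 ≤ v_r < 2√(g h_r)`, the discharge-form inverse Lax curve has exactly one
zero in `(0, ∞)`, namely `h = (2√(g h_r) − v_r)²/(4g)`. -/
theorem phirTilde_unique_zero (g hr vr : ℝ) (hg : 0 < g) (hhr : 0 < hr)
    (hv₁ : 0 ≤ vr) (hv₂ : vr < 2 * Real.sqrt (g * hr)) :
    ∀ h : ℝ, 0 < h →
      (phirTilde g hr vr h = 0 ↔ h = (2 * Real.sqrt (g * hr) - vr) ^ 2 / (4 * g)) := by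
  set s := Real.sqrt (g * hr) with hs_def
  have hs2 : s ^ 2 = g * hr := Real.sq_sqrt (le_of_lt (mul_pos hg hhr))
  have hsv : 0 ≤ 2 * s - vr := by linarith
  have hstar_le : (2 * s - vr) ^ 2 / (4 * g) ≤ hr := by
    rw [div_le_iff₀ (by positivity)]
    nlinarith [sq_nonneg vr, Real.sqrt_nonneg (g * hr)]
  intro h hh
  constructor
  · intro hz
    have hphi : phir g hr vr h = 0 := by
      rcases mul_eq_zero.mp hz with h1 | h1
      · exact absurd h1 (ne_of_gt hh)
      · exact h1
    unfold phir at hphi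
    by_cases hle : h ≤ hr
    · rw [if_pos hle] at hphi
      have hsqrt : Real.sqrt (g * h) = (2 * s - vr) / 2 := by linarith
      have : g * h = ((2 * s - vr) / 2) ^ 2 := by
        rw [← hsqrt, Real.sq_sqrt (le_of_lt (mul_pos hg hh))]
      field_simp at this ⊢
      linarith
    · exfalso
      rw [if_neg hle] at hphi
      push_neg at hle
      have harg : 0 < g * (h + hr) / (2 * h * hr) := by positivity
      have := Real.sqrt_pos.mpr harg
      nlinarith
  · intro heq
    have hsqrt : Real.sqrt (g * h) = (2 * s - vr) / 2 := by
      rw [heq]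
      have : g * ((2 * s - vr) ^ 2 / (4 * g)) = ((2 * s - vr) / 2) ^ 2 := by
        field_simp; ring
      rw [this, Real.sqrt_sq (by linarith)]
    have hle : h ≤ hr := heq ▸ hstar_le
    unfold phirTilde phir
    rw [if_pos hle, hsqrt]
    ring
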